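/- Let ℓ, N be positive integers with ℓ(ℓ+1) ≤ 2N+6. Then the sequence a_k = C(ℓ,k)·C(ℓ+k,k)/C(N+k,k), for 1 ≤ k ≤ ℓ, is nonincreasing in k; consequently the alternating sum ∑_{k=1}^ℓ (−1)^{k+1} a_k satisfies 0 ≤ ∑_{k=1}^ℓ (−1)^{k+1} a_k ≤ a_1 = ℓ(ℓ+1)/(N+1). -/

import Mathlib

private lemma key_nat (l N k : ℕ) (hk : 1 ≤ k) (hkl : k + 1 ≤ l) (hN : 1 ≤ N)
    (h : l*(l+1) ≤ 2*N+6) : (l - k) * (l + k + 1) ≤ (k+1) * (N+k+1) := by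
  obtain ⟨m, rfl⟩ : ∃ m, l = k + m := ⟨l - k, by omega⟩
  have hm : 1 ≤ m := by omega
  have hsub : k + m - k = m := by omega
  rw [hsub]
  nlinarith [Nat.mul_le_mul_left k hN, sq_nonneg k, hm, hk]

private lemma choice_nat (l N k : ℕ) (hk : 1 ≤ k) (hkl : k + 1 ≤ l) (hN : 1 ≤ N)
    (h : l*(l+1) ≤ 2*N+6) :
    Nat.choose l (k+1) * Nat.choose (l+(k+1)) (k+1) * Nat.choose (N+k) k ≤
      Nat.choose l k * Nat.choose (l+k) k * Nat.choose (N+(k+1)) (k+1) := by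
  have h1 : Nat.choose l (k+1) * (k+1) = Nat.choose l k * (l - k) :=
    Nat.choose_succ_right_eq l k
  have h2 : (l+k+1) * Nat.choose (l+k) k = Nat.choose (l+k+1) (k+1) * (k+1) :=
    Nat.add_one_mul_choose_eq (l+k) k
  have h3 : (N+k+1) * Nat.choose (N+k) k = Nat.choose (N+k+1) (k+1) * (k+1) :=
    Nat.add_one_mul_choose_eq (N+k) k
  have hkey := key_nat l N k hk hkl hN h
  have heq : l + (k+1) = l + k + 1 := by omega
  have heqN : N + (k+1) = N + k + 1 := by omega
  rw [heq, heqN]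
  have hmul : (k+1) * (k+1) *
      (Nat.choose l (k+1) * Nat.choose (l+k+1) (k+1) * Nat.choose (N+k) k) ≤
      (k+1) * (k+1) *
      (Nat.choose l k * Nat.choose (l+k) k * Nat.choose (N+k+1) (k+1)) := by
    have eA : (k+1) * (k+1) *
        (Nat.choose l (k+1) * Nat.choose (l+k+1) (k+1) * Nat.choose (N+k) k) =
        (Nat.choose l k * Nat.choose (l+k) k * Nat.choose (N+k) k) *
          ((l - k) * (l + k + 1)) := by
      calc (k+1) * (k+1) *
          (Nat.choose l (k+1) * Nat.choose (l+k+1) (k+1) * Nat.choose (N+k) k)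
          = (Nat.choose l (k+1) * (k+1)) * (Nat.choose (l+k+1) (k+1) * (k+1)) *
            Nat.choose (N+k) k := by ring
        _ = (Nat.choose l k * (l - k)) * ((l+k+1) * Nat.choose (l+k) k) *
            Nat.choose (N+k) k := by rw [h1, ← h2]
        _ = (Nat.choose l k * Nat.choose (l+k) k * Nat.choose (N+k) k) *
            ((l - k) * (l + k + 1)) := by ring
    have eB : (k+1) * (k+1) *
        (Nat.choose l k * Nat.choose (l+k) k * Nat.choose (N+k+1) (k+1)) =
        (Nat.choose l k * Nat.choose (l+k) k * Nat.choose (N+k) k) *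
          ((k+1) * (N+k+1)) := by
      calc (k+1) * (k+1) *
          (Nat.choose l k * Nat.choose (l+k) k * Nat.choose (N+k+1) (k+1))
          = (Nat.choose l k * Nat.choose (l+k) k) *
            (Nat.choose (N+k+1) (k+1) * (k+1)) * (k+1) := by ring
        _ = (Nat.choose l k * Nat.choose (l+k) k) *
            ((N+k+1) * Nat.choose (N+k) k) * (k+1) := by rw [← h3]
        _ = (Nat.choose l k * Nat.choose (l+k) k * Nat.choose (N+k) k) *
            ((k+1) * (N+k+1)) := by ring
    rw [eA, eB]
    exact Nat.mul_le_mul_left _ hkey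
  exact Nat.le_of_mul_le_mul_left hmul (by positivity)

/-- alternating sum bound for antitone nonneg sequences -/
private lemma alt_sum (a : ℕ → ℝ) (l : ℕ) (hl : 1 ≤ l)
    (hpos : ∀ k, 1 ≤ k → k ≤ l → 0 ≤ a k)
    (hmono : ∀ k, 1 ≤ k → k + 1 ≤ l → a (k+1) ≤ a k) :
    0 ≤ (∑ k ∈ Finset.Icc 1 l, (-1:ℝ)^(k+1) * a k) ∧
      (∑ k ∈ Finset.Icc 1 l, (-1:ℝ)^(k+1) * a k) ≤ a 1 := by
  set S : ℕ → ℝ := fun n => ∑ k ∈ Finset.Icc 1 n, (-1:ℝ)^(k+1) * a k with hS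
  have main : ∀ n, 1 ≤ n → n ≤ l →
      (Odd n → a n ≤ S n ∧ S n ≤ a 1) ∧
      (Even n → 0 ≤ S n ∧ S n ≤ a 1 - a n) := by
    intro n
    induction n with
    | zero => intro h0 _; omega
    | succ m ih =>
      intro _ hml
      by_cases hm : 1 ≤ m
      · have hstep : S (m+1) = S m + (-1:ℝ)^(m+2) * a (m+1) := by
          simp only [hS]
          rw [Finset.sum_Icc_succ_top (by omega : 1 ≤ m + 1)]
        obtain ⟨ihO, ihE⟩ := ih hm (by omega)
        have hmono' := hmono m hm hml
        have hpos' := hpos (m+1) (by omega) hml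
        constructor
        · intro hodd
          have hevenm : Even m := Nat.Odd.sub_odd hodd odd_one
          have hsign : (-1:ℝ)^(m+2) = 1 := by
            rcases hevenm with ⟨r, hr⟩
            have : m + 2 = 2*(r+1) := by omega
            rw [this, pow_mul]; norm_num
          obtain ⟨hE1, hE2⟩ := ihE hevenm
          rw [hstep, hsign]
          constructor
          · nlinarith
          · nlinarith
        · intro heven
          have hoddm : Odd m := by
            rcases Nat.even_or_odd m with hE | hO
            · exfalso; exact (Nat.even_add_one.mp heven) hE
            · exact hO
          have hsign : (-1:ℝ)^(m+2) = -1 := by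
            rcases hoddm with ⟨r, hr⟩
            have : m + 2 = 2*(r+1) + 1 := by omega
            rw [this, pow_succ, pow_mul]; norm_num
          obtain ⟨hO1, hO2⟩ := ihO hoddm
          rw [hstep, hsign]
          have ham : a (m+1) ≤ a m := hmono'
          constructor
          · nlinarith
          · nlinarith
      · -- m = 0, so n = 1
        have hm0 : m = 0 := by omega
        subst hm0
        have hS1 : S 1 = a 1 := by
          simp [hS]
        constructor
        · intro _; rw [hS1]; exact ⟨le_refl _, le_refl _⟩
        · intro hev; exact absurd hev (by simp [Nat.even_add_one])
  obtain ⟨hO, hE⟩ := main l hl le_rfl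
  rcases Nat.even_or_odd l with hev | hod
  · obtain ⟨h1, h2⟩ := hE hev
    have := hpos l hl le_rfl
    exact ⟨h1, by linarith⟩
  · obtain ⟨h1, h2⟩ := hO hod
    have := hpos l hl le_rfl
    exact ⟨by linarith, h2⟩

theorem stmt_11 (l N : ℕ) (hl : 1 ≤ l) (hN : 1 ≤ N) (h : l*(l+1) ≤ 2*N+6) :
    (∀ k, 1 ≤ k → k + 1 ≤ l →
      (Nat.choose l (k+1) * Nat.choose (l+(k+1)) (k+1) : ℝ) /
          (Nat.choose (N+(k+1)) (k+1)) ≤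
        (Nat.choose l k * Nat.choose (l+k) k : ℝ) / (Nat.choose (N+k) k)) ∧
    0 ≤ ∑ k ∈ Finset.Icc 1 l,
        (-1:ℝ)^(k+1) * (Nat.choose l k * Nat.choose (l+k) k : ℝ) /
          (Nat.choose (N+k) k) ∧
    ∑ k ∈ Finset.Icc 1 l,
        (-1:ℝ)^(k+1) * (Nat.choose l k * Nat.choose (l+k) k : ℝ) /
          (Nat.choose (N+k) k) ≤ (l:ℝ)*(l+1)/(N+1) := by
  set a : ℕ → ℝ := fun k =>
    (Nat.choose l k * Nat.choose (l+k) k : ℝ) / (Nat.choose (N+k) k) with ha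
  have hden : ∀ k : ℕ, (0:ℝ) < (Nat.choose (N+k) k : ℝ) := by
    intro k
    exact_mod_cast Nat.choose_pos (by omega : k ≤ N + k)
  have hmono : ∀ k, 1 ≤ k → k + 1 ≤ l → a (k+1) ≤ a k := by
    intro k hk hkl
    simp only [ha]
    rw [div_le_div_iff₀ (hden (k+1)) (hden k)]
    have := choice_nat l N k hk hkl hN h
    push_cast
    exact_mod_cast this
  have hpos : ∀ k, 1 ≤ k → k ≤ l → 0 ≤ a k := by
    intro k _ _
    simp only [ha]
    positivity
  have hsum_eq : ∀ n : ℕ,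
      (∑ k ∈ Finset.Icc 1 n, (-1:ℝ)^(k+1) *
        (Nat.choose l k * Nat.choose (l+k) k : ℝ) / (Nat.choose (N+k) k)) =
      ∑ k ∈ Finset.Icc 1 n, (-1:ℝ)^(k+1) * a k := by
    intro n
    refine Finset.sum_congr rfl fun k _ => ?_
    simp only [ha]
    ring
  have ha1 : a 1 = (l:ℝ)*(l+1)/(N+1) := by
    simp only [ha]
    rw [Nat.choose_one_right, Nat.choose_one_right, Nat.choose_one_right]
    push_cast
    ring
  obtain ⟨hlow, hhigh⟩ := alt_sum a l hl hpos hmono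
  refine ⟨fun k hk hkl => hmono k hk hkl, ?_, ?_⟩
  · rw [hsum_eq]; exact hlow
  · rw [hsum_eq]; rw [ha1] at hhigh; exact hhigh
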